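/- Let n ≥ 2 and let t_1, …, t_n be integers with t_1 ≥ −4, t_i ≥ −1 for 2 ≤ i ≤ n−1, and t_n ≥ 0, satisfying Σ_{i=1}^n t_i = 0 and Σ_{i=1}^n t_i² + 4·Σ_{i=2}^{n−1} t_i + 10·t_1 + 2·t_n = 0. Define a = Σ_{i=2}^{n−1} t_i² + t_n² − 2t_n. Then t_1² + 6t_1 + a = 0, and consequently a ∈ {0, 5, 8, 9}. -/

import Mathlib

lemma sum_Icc_split (m : ℕ) (f : ℕ → ℤ) :
    ∑ i ∈ Finset.Icc 1 (m + 2), f i = f 1 + ∑ i ∈ Finset.Icc 2 (m + 1), f i + f (m + 2) := by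
  rw [Finset.sum_Icc_succ_top (by omega : 1 ≤ m + 2)]
  have h : Finset.Icc 1 (m + 1) = insert 1 (Finset.Icc 2 (m + 1)) := by
    ext x; simp [Finset.mem_Icc]; omega
  rw [h, Finset.sum_insert (by simp)]

theorem propeller_L_degree_diophantine (n : ℕ) (hn : 2 ≤ n) (t : ℕ → ℤ) (a : ℤ)
    (h1 : t 1 ≥ -4) (hmid : ∀ i : ℕ, 2 ≤ i → i ≤ n - 1 → t i ≥ -1) (hlast : t n ≥ 0)
    (hsum : ∑ i ∈ Finset.Icc 1 n, t i = 0)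
    (hsq : ∑ i ∈ Finset.Icc 1 n, (t i) ^ 2 + 4 * ∑ i ∈ Finset.Icc 2 (n - 1), t i
      + 10 * t 1 + 2 * t n = 0)
    (ha : a = ∑ i ∈ Finset.Icc 2 (n - 1), (t i) ^ 2 + (t n) ^ 2 - 2 * t n) :
    (t 1) ^ 2 + 6 * t 1 + a = 0 ∧ a ∈ ({0, 5, 8, 9} : Set ℤ) := by
  obtain ⟨m, rfl⟩ : ∃ m, n = m + 2 := ⟨n - 2, by omega⟩
  have hm1 : m + 2 - 1 = m + 1 := by omega
  rw [sum_Icc_split m t] at hsum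
  rw [sum_Icc_split m (fun i => (t i) ^ 2), hm1] at hsq
  rw [hm1] at ha
  have hmsq : (0 : ℤ) ≤ ∑ i ∈ Finset.Icc 2 (m + 1), (t i) ^ 2 :=
    Finset.sum_nonneg fun i _ => sq_nonneg _
  have hanon : a ≥ -1 := by nlinarith [sq_nonneg (t (m + 2) - 1)]
  have key : (t 1) ^ 2 + 6 * t 1 + a = 0 := by linarith
  refine ⟨key, ?_⟩
  have hle : t 1 ≤ 0 := by nlinarith
  set x := t 1 with hx
  simp only [Set.mem_insert_iff, Set.mem_singleton_iff]
  interval_cases x <;> omega
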